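/- Let α > 0 and β > 0. Then there is a unique K̃ > 2(α + β) with 2β · ∑_{n=1}^∞ 1/(K̃ n² − 2α) = 1, and for all square-summable real sequences (x_n), (y_n), one has α ∑_{n=1}^∞ (x_n + y_n)²/n² + β (∑_{n=1}^∞ (x_n + y_n)/n)² ≤ K̃ (∑_{n=1}^∞ x_n² + ∑_{n=1}^∞ y_n²). -/

import Mathlib

open Filter Topology

private lemma pnat_one_le_coe (n : ℕ+) : (1:ℝ) ≤ ((n:ℕ):ℝ) := by
  exact_mod_cast n.one_le

private lemma pnat_one_le_sq (n : ℕ+) : (1:ℝ) ≤ ((n:ℕ):ℝ)^2 :=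
  one_le_pow₀ (pnat_one_le_coe n)

private lemma pnat_sq_pos (n : ℕ+) : (0:ℝ) < ((n:ℕ):ℝ)^2 :=
  lt_of_lt_of_le one_pos (pnat_one_le_sq n)

private lemma summable_inv_sq_pnat : Summable fun n : ℕ+ => 1 / ((n:ℕ):ℝ)^2 := by
  have h : Summable fun n : ℕ => 1 / (n:ℝ)^2 :=
    Real.summable_one_div_nat_pow.mpr (by norm_num)
  exact h.comp_injective PNat.coe_injective

private lemma denom_pos {α K : ℝ} (hK : 2*α < K) (hK0 : 0 < K) (n : ℕ+) :
    0 < K * ((n:ℕ):ℝ)^2 - 2*α := by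
  have h := pnat_one_le_sq n
  nlinarith

private lemma denom_bound {α K : ℝ} (hα : 0 < α) (hK : 2*α < K) (hK0 : 0 < K) (n : ℕ+) :
    1 / (K * ((n:ℕ):ℝ)^2 - 2*α) ≤ (K - 2*α)⁻¹ * (1 / ((n:ℕ):ℝ)^2) := by
  have h1 := pnat_one_le_sq n
  have h2 := denom_pos hK hK0 n
  have h4 : 0 < (K - 2*α) * ((n:ℕ):ℝ)^2 := by nlinarith
  have h3 : (K - 2*α) * ((n:ℕ):ℝ)^2 ≤ K * ((n:ℕ):ℝ)^2 - 2*α := by nlinarith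
  calc 1 / (K * ((n:ℕ):ℝ)^2 - 2*α) ≤ 1 / ((K - 2*α) * ((n:ℕ):ℝ)^2) :=
        one_div_le_one_div_of_le h4 h3
    _ = (K - 2*α)⁻¹ * (1 / ((n:ℕ):ℝ)^2) := by
        rw [one_div, mul_inv, ← one_div (((n:ℕ):ℝ)^2)]

private lemma summable_denom {α K : ℝ} (hK : 2*α < K) (hK0 : 0 < K) (hα : 0 < α) :
    Summable fun n : ℕ+ => 1 / (K * ((n:ℕ):ℝ)^2 - 2*α) := by
  apply Summable.of_nonneg_of_le (fun n => (one_div_pos.mpr (denom_pos hK hK0 n)).le)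
    (f := fun n : ℕ+ => (K - 2*α)⁻¹ * (1 / ((n:ℕ):ℝ)^2))
    (fun n => denom_bound hα hK hK0 n) (summable_inv_sq_pnat.mul_left _)

/-- Cauchy–Schwarz for tsums over `ℕ+`. -/
private lemma tsum_cauchy_schwarz {f g : ℕ+ → ℝ} (hf : Summable fun n => f n ^ 2)
    (hg : Summable fun n => g n ^ 2) :
    (∑' n, f n * g n)^2 ≤ (∑' n, f n ^ 2) * (∑' n, g n ^ 2) := by
  have hfg : Summable fun n => f n * g n := by
    apply Summable.of_abs
    apply Summable.of_nonneg_of_le (fun n => abs_nonneg _)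
      (f := fun n => (f n ^ 2 + g n ^ 2) / 2) (fun n => ?_) ((hf.add hg).div_const 2)
    rw [abs_mul]
    nlinarith [sq_nonneg (|f n| - |g n|), sq_abs (f n), sq_abs (g n)]
  have h1 : ∀ s : Finset ℕ+, (∑ n ∈ s, f n * g n)^2 ≤ (∑' n, f n ^ 2) * (∑' n, g n ^ 2) := by
    intro s
    refine (Finset.sum_mul_sq_le_sq_mul_sq s f g).trans ?_
    have hfs : ∑ n ∈ s, f n ^ 2 ≤ ∑' n, f n ^ 2 :=
      Summable.sum_le_tsum s (fun n _ => sq_nonneg _) hf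
    have hgs : ∑ n ∈ s, g n ^ 2 ≤ ∑' n, g n ^ 2 :=
      Summable.sum_le_tsum s (fun n _ => sq_nonneg _) hg
    exact mul_le_mul hfs hgs (Finset.sum_nonneg fun n _ => sq_nonneg _)
      (tsum_nonneg fun n => sq_nonneg _)
  have h2 : Tendsto (fun s : Finset ℕ+ => (∑ n ∈ s, f n * g n)^2) atTop
      (𝓝 ((∑' n, f n * g n)^2)) := hfg.hasSum.pow 2
  exact le_of_tendsto h2 (Filter.Eventually.of_forall h1)

theorem stmt_3 (α β : ℝ) (hα : 0 < α) (hβ : 0 < β) :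
    (∃! Kt : ℝ, Kt > 2 * (α + β) ∧
        2 * β * ∑' n : ℕ+, 1 / (Kt * ((n : ℕ) : ℝ) ^ 2 - 2 * α) = 1) ∧
    ∀ Kt : ℝ, Kt > 2 * (α + β) →
      2 * β * ∑' n : ℕ+, 1 / (Kt * ((n : ℕ) : ℝ) ^ 2 - 2 * α) = 1 →
      ∀ x y : ℕ+ → ℝ, (Summable fun n => (x n) ^ 2) → (Summable fun n => (y n) ^ 2) →
        α * ∑' n : ℕ+, (x n + y n) ^ 2 / ((n : ℕ) : ℝ) ^ 2
          + β * (∑' n : ℕ+, (x n + y n) / ((n : ℕ) : ℝ)) ^ 2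
          ≤ Kt * ((∑' n : ℕ+, (x n) ^ 2) + ∑' n : ℕ+, (y n) ^ 2) := by
  set c : ℝ := 2 * (α + β) with hc
  have hcα : 2 * α < c := by simp only [hc]; linarith
  have hc0 : 0 < c := by positivity
  set g : ℝ → ℝ := fun K => 2 * β * ∑' n : ℕ+, 1 / (K * ((n:ℕ):ℝ)^2 - 2*α) with hg
  -- strict antitonicity on (2α, ∞)
  have hanti : ∀ K₁ K₂ : ℝ, 2*α < K₁ → K₁ < K₂ → g K₂ < g K₁ := by
    intro K₁ K₂ h1 h12
    have h10 : 0 < K₁ := lt_trans (by linarith) h1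
    have h2 : 2*α < K₂ := lt_trans h1 h12
    have h20 : 0 < K₂ := lt_trans h10 h12
    have hts : (∑' n : ℕ+, 1 / (K₂ * ((n:ℕ):ℝ)^2 - 2*α)) <
        ∑' n : ℕ+, 1 / (K₁ * ((n:ℕ):ℝ)^2 - 2*α) := by
      refine Summable.tsum_lt_tsum (i := 1) (fun n => ?_) ?_
        (summable_denom h2 h20 hα) (summable_denom h1 h10 hα)
      · apply one_div_le_one_div_of_le (denom_pos h1 h10 n)
        have := pnat_sq_pos n
        nlinarith [pnat_one_le_sq n]
      · apply one_div_lt_one_div_of_lt (denom_pos h1 h10 1)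
        have : ((((1:ℕ+):ℕ)):ℝ) = 1 := by norm_num
        rw [this]; nlinarith
    simp only [hg]
    nlinarith
  -- the inequality (second part), proven first
  have main : ∀ Kt : ℝ, Kt > 2 * (α + β) →
      2 * β * ∑' n : ℕ+, 1 / (Kt * ((n : ℕ) : ℝ) ^ 2 - 2 * α) = 1 →
      ∀ x y : ℕ+ → ℝ, (Summable fun n => (x n) ^ 2) → (Summable fun n => (y n) ^ 2) →
        α * ∑' n : ℕ+, (x n + y n) ^ 2 / ((n : ℕ) : ℝ) ^ 2
          + β * (∑' n : ℕ+, (x n + y n) / ((n : ℕ) : ℝ)) ^ 2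
          ≤ Kt * ((∑' n : ℕ+, (x n) ^ 2) + ∑' n : ℕ+, (y n) ^ 2) := by
    intro K hK hsum x y hx hy
    have hKα : 2*α < K := lt_trans hcα hK
    have hK0 : 0 < K := lt_trans hc0 hK
    set z : ℕ+ → ℝ := fun n => x n + y n with hzdef
    have hz2 : Summable fun n => z n ^ 2 := by
      apply Summable.of_nonneg_of_le (fun n => sq_nonneg _)
        (f := fun n => 2 * x n ^ 2 + 2 * y n ^ 2) (fun n => ?_)
        ((hx.mul_left 2).add (hy.mul_left 2))
      simp only [hzdef]; nlinarith [sq_nonneg (x n - y n)]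
    have hzn2 : Summable fun n => z n ^ 2 / ((n:ℕ):ℝ)^2 := by
      apply Summable.of_nonneg_of_le (fun n => by positivity) (fun n => ?_) hz2
      rw [div_le_iff₀ (pnat_sq_pos n)]
      nlinarith [pnat_one_le_sq n, sq_nonneg (z n)]
    set b : ℕ+ → ℝ := fun n => K * ((n:ℕ):ℝ)^2 - 2*α with hbdef
    have hbpos : ∀ n, 0 < b n := denom_pos hKα hK0
    have hbsum : Summable fun n : ℕ+ => 1 / b n := summable_denom hKα hK0 hα
    -- ∑' 1/b = 1/(2β)
    have hBval : (∑' n : ℕ+, 1 / b n) = 1 / (2*β) := by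
      have h2β : (2*β) ≠ 0 := by positivity
      field_simp
      linarith [hsum]
    -- key pointwise identity
    have hbz : ∀ n : ℕ+, b n * (z n / ((n:ℕ):ℝ))^2 = K * z n ^ 2 - 2*α * (z n ^2 / ((n:ℕ):ℝ)^2) := by
      intro n
      have hn : ((n:ℕ):ℝ) ≠ 0 := by positivity
      field_simp [hbdef]
      ring
    have hA_sum : Summable fun n => b n * (z n / ((n:ℕ):ℝ))^2 := by
      apply Summable.congr (f := fun n => K * z n ^ 2 - 2*α * (z n ^2 / ((n:ℕ):ℝ)^2))
      · exact (hz2.mul_left K).sub (hzn2.mul_left (2*α))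
      · intro n; rw [hbz n]
    have hA_val : (∑' n : ℕ+, b n * (z n / ((n:ℕ):ℝ))^2)
        = K * (∑' n : ℕ+, z n ^ 2) - 2*α * ∑' n : ℕ+, z n ^2 / ((n:ℕ):ℝ)^2 := by
      rw [tsum_congr hbz, Summable.tsum_sub (hz2.mul_left K) (hzn2.mul_left (2*α)),
        tsum_mul_left, tsum_mul_left]
    -- Cauchy-Schwarz
    set f1 : ℕ+ → ℝ := fun n => Real.sqrt (b n) * (z n / ((n:ℕ):ℝ)) with hf1
    set g1 : ℕ+ → ℝ := fun n => 1 / Real.sqrt (b n) with hg1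
    have hf1sq : ∀ n, f1 n ^ 2 = b n * (z n / ((n:ℕ):ℝ))^2 := by
      intro n
      simp only [hf1, mul_pow, Real.sq_sqrt (hbpos n).le]
    have hg1sq : ∀ n, g1 n ^ 2 = 1 / b n := by
      intro n
      simp only [hg1, div_pow, one_pow, Real.sq_sqrt (hbpos n).le]
    have hf1g1 : ∀ n, f1 n * g1 n = z n / ((n:ℕ):ℝ) := by
      intro n
      have hs : Real.sqrt (b n) ≠ 0 := (Real.sqrt_pos.mpr (hbpos n)).ne'
      simp only [hf1, hg1]
      field_simp
    have hcs := tsum_cauchy_schwarz (f := f1) (g := g1)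
      ((Summable.congr hA_sum fun n => (hf1sq n).symm))
      ((Summable.congr hbsum fun n => (hg1sq n).symm))
    rw [tsum_congr hf1g1, tsum_congr hf1sq, tsum_congr hg1sq, hA_val, hBval] at hcs
    -- combine
    have hZle : (∑' n : ℕ+, z n ^ 2) ≤ 2 * ((∑' n : ℕ+, (x n) ^ 2) + ∑' n : ℕ+, (y n) ^ 2) := by
      have h := Summable.tsum_le_tsum (f := fun n => z n ^ 2)
        (g := fun n => 2 * x n ^ 2 + 2 * y n ^ 2)
        (fun n => by simp only [hzdef]; nlinarith [sq_nonneg (x n - y n)]) hz2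
        ((hx.mul_left 2).add (hy.mul_left 2))
      rwa [Summable.tsum_add (hx.mul_left 2) (hy.mul_left 2), tsum_mul_left, tsum_mul_left,
        ← mul_add] at h
    set T := ∑' n : ℕ+, z n ^2 / ((n:ℕ):ℝ)^2 with hT
    set S := ∑' n : ℕ+, z n / ((n:ℕ):ℝ) with hS
    set Z := ∑' n : ℕ+, z n ^ 2 with hZ
    have hTnn : 0 ≤ T := tsum_nonneg fun n => by positivity
    have key : S^2 ≤ (K * Z - 2*α*T) * (1/(2*β)) := hcs
    have hgoal : α * T + β * S^2 ≤ K * ((∑' n : ℕ+, (x n) ^ 2) + ∑' n : ℕ+, (y n) ^ 2) := by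
      have h1 : β * S^2 ≤ (K * Z - 2*α*T)/2 := by
        have := mul_le_mul_of_nonneg_left key hβ.le
        calc β * S^2 ≤ β * ((K * Z - 2*α*T) * (1/(2*β))) := this
          _ = (K * Z - 2*α*T)/2 := by field_simp
      have h2 : K * Z / 2 ≤ K * ((∑' n : ℕ+, (x n) ^ 2) + ∑' n : ℕ+, (y n) ^ 2) := by
        nlinarith
      linarith
    exact hgoal
  refine ⟨?_, main⟩
  -- existence and uniqueness
  -- S = ∑ 1/n²
  set S : ℝ := ∑' n : ℕ+, 1 / ((n:ℕ):ℝ)^2 with hSdef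
  have hS1 : (1:ℝ) ≤ S := by
    have h := Summable.sum_le_tsum (f := fun n : ℕ+ => 1 / ((n:ℕ):ℝ)^2) ({1} : Finset ℕ+)
      (fun n _ => by positivity) summable_inv_sq_pnat
    have hone : (∑ n ∈ ({1} : Finset ℕ+), 1 / ((n:ℕ):ℝ)^2) = 1 := by
      rw [Finset.sum_singleton]; norm_num
    rw [hSdef]
    calc (1:ℝ) = _ := hone.symm
      _ ≤ _ := h
  set M : ℝ := 2*α + 2*β*S + 1 with hM
  have hcM : c < M := by simp only [hM, hc]; nlinarith
  have hMα : 2*α < M := lt_trans hcα hcM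
  have hM0 : 0 < M := lt_trans hc0 hcM
  -- g c > 1
  have hgc : 1 < g c := by
    have hsum := summable_denom hcα hc0 hα
    have h := Summable.sum_le_tsum ({1, 2} : Finset ℕ+)
      (fun n _ => (one_div_pos.mpr (denom_pos hcα hc0 n)).le) hsum
    have he : (∑ n ∈ ({1, 2} : Finset ℕ+), 1 / (c * ((n:ℕ):ℝ)^2 - 2*α))
        = 1 / (c - 2*α) + 1 / (c*4 - 2*α) := by
      rw [Finset.sum_insert (by decide), Finset.sum_singleton]
      norm_num
    rw [he] at h
    have h1 : 1 / (c - 2*α) = 1/(2*β) := by rw [hc]; ring_nf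
    have h2 : 0 < 1 / (c*4 - 2*α) := by
      apply one_div_pos.mpr; nlinarith
    simp only [hg]
    have : 1/(2*β) + 1 / (c*4 - 2*α) ≤ ∑' n : ℕ+, 1 / (c * ((n:ℕ):ℝ)^2 - 2*α) := by
      rw [← h1]; exact h
    have hb : 1/(2*β) < ∑' n : ℕ+, 1 / (c * ((n:ℕ):ℝ)^2 - 2*α) := by linarith
    calc (1:ℝ) = 2*β * (1/(2*β)) := by field_simp
      _ < 2*β * ∑' n : ℕ+, 1 / (c * ((n:ℕ):ℝ)^2 - 2*α) := by
          apply mul_lt_mul_of_pos_left hb (by positivity)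
  -- g M < 1
  have hgM : g M < 1 := by
    have hsum := summable_denom hMα hM0 hα
    have hle : (∑' n : ℕ+, 1 / (M * ((n:ℕ):ℝ)^2 - 2*α)) ≤ (M - 2*α)⁻¹ * S := by
      have h := Summable.tsum_le_tsum (f := fun n : ℕ+ => 1 / (M * ((n:ℕ):ℝ)^2 - 2*α))
        (g := fun n : ℕ+ => (M - 2*α)⁻¹ * (1 / ((n:ℕ):ℝ)^2))
        (fun n => denom_bound hα hMα hM0 n) hsum
        (summable_inv_sq_pnat.mul_left _)
      rwa [tsum_mul_left] at h
    have hMS : (M - 2*α)⁻¹ * S = S * (2*β*S+1)⁻¹ := by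
      rw [hM]; ring_nf
    have hpos : (0:ℝ) < 2*β*S + 1 := by nlinarith
    simp only [hg]
    calc 2*β*∑' n : ℕ+, 1 / (M * ((n:ℕ):ℝ)^2 - 2*α) ≤ 2*β*((M - 2*α)⁻¹ * S) := by
          apply mul_le_mul_of_nonneg_left hle (by positivity)
      _ = 2*β*S * (2*β*S+1)⁻¹ := by rw [hMS]; ring
      _ < 1 := by
          rw [mul_inv_lt_iff₀ hpos]; linarith
  -- continuity of g on [c, M]
  have hcont : ContinuousOn g (Set.Icc c M) := by
    apply ContinuousOn.mul continuousOn_const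
    apply continuousOn_tsum (u := fun n : ℕ+ => 1 / (c * ((n:ℕ):ℝ)^2 - 2*α))
    · intro n
      apply ContinuousOn.div continuousOn_const
        (Continuous.continuousOn
          ((continuous_mul_right _).sub continuous_const))
      intro K hK
      exact ne_of_gt (denom_pos (lt_of_lt_of_le hcα hK.1)
        (lt_of_lt_of_le hc0 hK.1) n)
    · exact summable_denom hcα hc0 hα
    · intro n K hK
      have hKα' : 2*α < K := lt_of_lt_of_le hcα hK.1
      have hK0' : 0 < K := lt_of_lt_of_le hc0 hK.1
      rw [Real.norm_eq_abs, abs_of_pos (one_div_pos.mpr (denom_pos hKα' hK0' n))]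
      apply one_div_le_one_div_of_le (denom_pos hcα hc0 n)
      have := pnat_one_le_sq n
      nlinarith [hK.1]
  -- IVT
  have hIoo : (1:ℝ) ∈ Set.Ioo (g M) (g c) := ⟨hgM, hgc⟩
  obtain ⟨Kt, hKt, hKtval⟩ := intermediate_value_Ioo' hcM.le hcont hIoo
  refine ⟨Kt, ⟨hKt.1, hKtval⟩, ?_⟩
  rintro K' ⟨hK', hK'val⟩
  by_contra hne
  have e1 : g K' = 1 := hK'val
  rcases lt_or_gt_of_ne hne with h | h
  · have h2 := hanti K' Kt (lt_trans hcα hK') h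
    rw [e1, hKtval] at h2; exact lt_irrefl 1 h2
  · have h2 := hanti Kt K' (lt_trans hcα hKt.1) h
    rw [e1, hKtval] at h2; exact lt_irrefl 1 h2
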